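/- Let n ∈ ℕ and let w_1,…,w_n be positive integers with Σ_{κ=1}^n w_κ = 2W. For s ∈ {−1,1}^n define U(s) := {u ∈ ℝ^{2n+3} : 0 ≤ u_i ≤ 1 for i ≤ n, u_{n+i} = u_i − 1/2 for i ≤ n, 0 ≤ u_{2n+1} ≤ 1, −1 ≤ u_{2n+2} ≤ 1, u_{2n+3} = 1/2, and additionally u_κ ≥ 1/2 whenever s_κ = 1 and u_κ ≤ 1/2 whenever s_κ = −1 for κ ≤ n}. Let x¹ := (w_1,…,w_n, 0,…,0, −W, 0, 0) and x² := (0,…,0, −w_1,…,−w_n, W, 2W, 0) in ℝ^{2n+3}, let R := {x¹, x²}, and define Z(s) := max_{x∈R} min_{u∈U(s)} min_{x'∈R} u·(x − x'). Then for every s ∈ {−1,1}^n, Z(s) = max( Σ_{κ: s_κ=1} w_κ − W, W − Σ_{κ: s_κ=1} w_κ ) − 4W ≥ −4W, and min_{s∈{−1,1}^n} Z(s) = −4W if and only if there exists a subset X ⊆ {1,…,n} with Σ_{κ∈X} w_κ = W. -/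

import Mathlib

open scoped BigOperators

noncomputable section

/-- Index type for `ℝ^{2n+3}`: the first `n` coordinates, the second `n` coordinates,
and the last three coordinates. -/
abbrev IdxR (n : ℕ) := Fin n ⊕ Fin n ⊕ Fin 3

/-- The uncertainty set `U(s)` of the Partition reduction for the min-max regret problem. -/
def UpartR {n : ℕ} (s : Fin n → ℤ) : Set (IdxR n → ℝ) :=
  {u | (∀ i : Fin n, 0 ≤ u (Sum.inl i) ∧ u (Sum.inl i) ≤ 1) ∧
    (∀ i : Fin n, u (Sum.inr (Sum.inl i)) = u (Sum.inl i) - 1 / 2) ∧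
    (0 ≤ u (Sum.inr (Sum.inr 0)) ∧ u (Sum.inr (Sum.inr 0)) ≤ 1) ∧
    (-1 ≤ u (Sum.inr (Sum.inr 1)) ∧ u (Sum.inr (Sum.inr 1)) ≤ 1) ∧
    u (Sum.inr (Sum.inr 2)) = 1 / 2 ∧
    (∀ κ : Fin n, s κ = 1 → 1 / 2 ≤ u (Sum.inl κ)) ∧
    (∀ κ : Fin n, s κ = -1 → u (Sum.inl κ) ≤ 1 / 2)}

/-- The first item `x¹ = (w₁,…,wₙ,0,…,0,−W,0,0)` of the Partition reduction. -/
def xOneR {n : ℕ} (w : Fin n → ℕ) (W : ℕ) : IdxR n → ℝ :=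
  Sum.elim (fun i => (w i : ℝ)) (Sum.elim (fun _ => 0) ![-(W : ℝ), 0, 0])

/-- The second item `x² = (0,…,0,−w₁,…,−wₙ,W,2W,0)` of the Partition reduction. -/
def xTwoR {n : ℕ} (w : Fin n → ℕ) (W : ℕ) : IdxR n → ℝ :=
  Sum.elim (fun _ => 0) (Sum.elim (fun i => -(w i : ℝ)) ![(W : ℝ), 2 * W, 0])

/-- `Z(s) = max_{x∈R} min_{u∈U(s)} min_{x'∈R} u·(x − x')`, the negative of the worst-case
regret of the best recommendation from `R = {x¹, x²}` under response scenario `s`. -/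
def Zreg {n : ℕ} (w : Fin n → ℕ) (W : ℕ) (s : Fin n → ℤ) : EReal :=
  ⨆ x ∈ ({xOneR w W, xTwoR w W} : Set (IdxR n → ℝ)),
    ⨅ u ∈ UpartR s, ⨅ x' ∈ ({xOneR w W, xTwoR w W} : Set (IdxR n → ℝ)),
      (((∑ j, u j * x j) - ∑ j, u j * x' j : ℝ) : EReal)

namespace MMRAux

variable {n : ℕ}

lemma sum_mul_xOneR (w : Fin n → ℕ) (W : ℕ) (u : IdxR n → ℝ) :
    ∑ j, u j * xOneR w W j
      = (∑ i, u (Sum.inl i) * w i) - W * u (Sum.inr (Sum.inr 0)) := by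
  simp [xOneR, Fintype.sum_sum_type, Fin.sum_univ_three]
  ring

lemma sum_mul_xTwoR (w : Fin n → ℕ) (W : ℕ) (u : IdxR n → ℝ)
    (hW : ∑ κ, w κ = 2 * W)
    (hlin : ∀ i : Fin n, u (Sum.inr (Sum.inl i)) = u (Sum.inl i) - 1 / 2) :
    ∑ j, u j * xTwoR w W j
      = -(∑ i, u (Sum.inl i) * w i) + W + W * u (Sum.inr (Sum.inr 0))
        + 2 * W * u (Sum.inr (Sum.inr 1)) := by
  have h2 : (∑ i, (w i : ℝ)) = 2 * W := by exact_mod_cast hW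
  simp only [xTwoR, Fintype.sum_sum_type, Fin.sum_univ_three]
  simp [hlin, mul_comm]
  have h3 : ∑ x : Fin n, (w x:ℝ) * (u (Sum.inl x) - 2⁻¹)
      = ∑ x : Fin n, (w x:ℝ) * u (Sum.inl x) - 2⁻¹ * ∑ x, (w x:ℝ) := by
    simp [mul_sub, Finset.sum_sub_distrib, Finset.mul_sum, mul_comm]
  rw [h3, h2]; ring

lemma diff_eq (w : Fin n → ℕ) (W : ℕ) (u : IdxR n → ℝ)
    (hW : ∑ κ, w κ = 2 * W)
    (hlin : ∀ i : Fin n, u (Sum.inr (Sum.inl i)) = u (Sum.inl i) - 1 / 2) :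
    (∑ j, u j * xOneR w W j) - (∑ j, u j * xTwoR w W j)
      = 2 * (∑ i, u (Sum.inl i) * w i) - W - 2 * W * u (Sum.inr (Sum.inr 0))
        - 2 * W * u (Sum.inr (Sum.inr 1)) := by
  rw [sum_mul_xOneR, sum_mul_xTwoR w W u hW hlin]; ring

lemma T_bounds (w : Fin n → ℕ) (W : ℕ) (s : Fin n → ℤ)
    (hval : ∀ κ, s κ = -1 ∨ s κ = 1) (hW : ∑ κ, w κ = 2 * W)
    (u : IdxR n → ℝ) (hu : u ∈ UpartR s) :
    (∑ κ ∈ Finset.univ.filter fun κ => s κ = 1, (w κ : ℝ)) / 2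
        ≤ ∑ i, u (Sum.inl i) * w i ∧
      ∑ i, u (Sum.inl i) * w i
        ≤ W + (∑ κ ∈ Finset.univ.filter fun κ => s κ = 1, (w κ : ℝ)) / 2 := by
  obtain ⟨hbox, -, -, -, -, hge, hle⟩ := hu
  set F := Finset.univ.filter fun κ => s κ = 1 with hF
  have hsplit := Finset.sum_filter_add_sum_filter_not Finset.univ
    (fun κ => s κ = 1) (fun i => u (Sum.inl i) * (w i : ℝ))
  have hwsplit : (∑ κ ∈ F, (w κ : ℝ)) + ∑ κ ∈ Finset.univ.filter fun κ => ¬ s κ = 1, (w κ : ℝ)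
      = 2 * W := by
    rw [Finset.sum_filter_add_sum_filter_not]
    exact_mod_cast hW
  have h1lb : ∑ κ ∈ F, (1/2 : ℝ) * w κ ≤ ∑ κ ∈ F, u (Sum.inl κ) * w κ := by
    apply Finset.sum_le_sum
    intro κ hκ
    have : (0:ℝ) ≤ (w κ : ℝ) := Nat.cast_nonneg _
    nlinarith [hge κ (by simpa [hF] using hκ)]
  have h1ub : ∑ κ ∈ F, u (Sum.inl κ) * w κ ≤ ∑ κ ∈ F, (w κ : ℝ) := by
    apply Finset.sum_le_sum
    intro κ hκ
    have hb := (hbox κ).2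
    have : (0:ℝ) ≤ (w κ : ℝ) := Nat.cast_nonneg _
    nlinarith
  have h2lb : (0:ℝ) ≤ ∑ κ ∈ Finset.univ.filter fun κ => ¬ s κ = 1, u (Sum.inl κ) * w κ := by
    apply Finset.sum_nonneg
    intro κ hκ
    exact mul_nonneg (hbox κ).1 (Nat.cast_nonneg _)
  have h2ub : ∑ κ ∈ Finset.univ.filter fun κ => ¬ s κ = 1, u (Sum.inl κ) * (w κ:ℝ)
      ≤ ∑ κ ∈ Finset.univ.filter fun κ => ¬ s κ = 1, (1/2:ℝ) * w κ := by
    apply Finset.sum_le_sum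
    intro κ hκ
    have hne : ¬ s κ = 1 := by simpa using hκ
    have hm1 : s κ = -1 := (hval κ).resolve_right hne
    have : (0:ℝ) ≤ (w κ : ℝ) := Nat.cast_nonneg _
    nlinarith [hle κ hm1]
  rw [← Finset.mul_sum] at h1lb h2ub
  constructor
  · calc (∑ κ ∈ F, (w κ : ℝ)) / 2 = (1/2) * ∑ κ ∈ F, (w κ : ℝ) := by ring
    _ ≤ ∑ κ ∈ F, u (Sum.inl κ) * w κ := h1lb
    _ ≤ ∑ i, u (Sum.inl i) * w i := by
        rw [← hsplit]; linarith
  · rw [← hsplit]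
    have : (1/2:ℝ) * ∑ κ ∈ Finset.univ.filter fun κ => ¬ s κ = 1, (w κ:ℝ)
        = (2 * W - ∑ κ ∈ F, (w κ : ℝ)) / 2 := by
      rw [show (∑ κ ∈ Finset.univ.filter fun κ => ¬ s κ = 1, (w κ:ℝ))
          = 2 * W - ∑ κ ∈ F, (w κ : ℝ) by linarith]
      ring
    rw [this] at h2ub
    linarith

/-- first minimizer -/
def uStar1 (s : Fin n → ℤ) : IdxR n → ℝ :=
  Sum.elim (fun κ => if s κ = 1 then 1/2 else 0)
    (Sum.elim (fun κ => (if s κ = 1 then 1/2 else 0) - 1/2) ![1, 1, 1/2])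

/-- second minimizer -/
def uStar2 (s : Fin n → ℤ) : IdxR n → ℝ :=
  Sum.elim (fun κ => if s κ = 1 then 1 else 1/2)
    (Sum.elim (fun κ => (if s κ = 1 then 1 else 1/2) - 1/2) ![0, -1, 1/2])

lemma uStar1_mem (s : Fin n → ℤ) : uStar1 s ∈ UpartR s := by
  refine ⟨fun i => ?_, fun i => rfl, by norm_num [uStar1], by norm_num [uStar1],
    by norm_num [uStar1]; rfl, fun κ h => ?_, fun κ h => ?_⟩
  · simp only [uStar1, Sum.elim_inl]; split <;> norm_num
  · simp only [uStar1, Sum.elim_inl]; rw [if_pos h]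
  · simp only [uStar1, Sum.elim_inl]
    have : ¬ s κ = 1 := by rw [h]; decide
    rw [if_neg this]; norm_num

lemma uStar2_mem (s : Fin n → ℤ) : uStar2 s ∈ UpartR s := by
  refine ⟨fun i => ?_, fun i => rfl, by norm_num [uStar2], by norm_num [uStar2],
    by norm_num [uStar2]; rfl, fun κ h => ?_, fun κ h => ?_⟩
  · simp only [uStar2, Sum.elim_inl]; split <;> norm_num
  · simp only [uStar2, Sum.elim_inl]; split <;> norm_num
  · simp only [uStar2, Sum.elim_inl]
    have : ¬ s κ = 1 := by rw [h]; decide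
    rw [if_neg this]

lemma T_uStar1 (w : Fin n → ℕ) (s : Fin n → ℤ) :
    ∑ i, uStar1 s (Sum.inl i) * w i
      = (∑ κ ∈ Finset.univ.filter fun κ => s κ = 1, (w κ : ℝ)) / 2 := by
  simp only [uStar1, Sum.elim_inl, ite_mul, zero_mul]
  rw [← Finset.sum_filter, ← Finset.mul_sum]
  ring

lemma T_uStar2 (w : Fin n → ℕ) (W : ℕ) (s : Fin n → ℤ) (hW : ∑ κ, w κ = 2 * W) :
    ∑ i, uStar2 s (Sum.inl i) * w i
      = W + (∑ κ ∈ Finset.univ.filter fun κ => s κ = 1, (w κ : ℝ)) / 2 := by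
  have h2 : (∑ i, (w i : ℝ)) = 2 * W := by exact_mod_cast hW
  have key : ∀ i : Fin n, uStar2 s (Sum.inl i) * w i
      = (if s i = 1 then (1:ℝ)/2 else 0) * w i + (1/2) * w i := by
    intro i; simp only [uStar2, Sum.elim_inl]; split <;> ring
  rw [Finset.sum_congr rfl fun i _ => key i, Finset.sum_add_distrib]
  simp only [ite_mul, zero_mul]
  rw [← Finset.sum_filter, ← Finset.mul_sum, ← Finset.mul_sum, h2]
  ring

lemma inf1 (w : Fin n → ℕ) (W : ℕ) (s : Fin n → ℤ)
    (hval : ∀ κ, s κ = -1 ∨ s κ = 1) (hW : ∑ κ, w κ = 2 * W) :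
    (⨅ u ∈ UpartR s, ⨅ x' ∈ ({xOneR w W, xTwoR w W} : Set (IdxR n → ℝ)),
        (((∑ j, u j * xOneR w W j) - ∑ j, u j * x' j : ℝ) : EReal))
      = (((∑ κ ∈ Finset.univ.filter fun κ => s κ = 1, (w κ : ℝ)) - 5 * W : ℝ) : EReal) := by
  set A := ∑ κ ∈ Finset.univ.filter fun κ => s κ = 1, (w κ : ℝ) with hA
  apply le_antisymm
  · refine le_trans (iInf₂_le (uStar1 s) (uStar1_mem s)) ?_
    rw [iInf_pair]
    have hd : (∑ j, uStar1 s j * xOneR w W j) - ∑ j, uStar1 s j * xTwoR w W j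
        = A - 5 * W := by
      rw [diff_eq w W _ hW (uStar1_mem s).2.1, T_uStar1]
      have e0 : uStar1 s (Sum.inr (Sum.inr 0)) = 1 := rfl
      have e1 : uStar1 s (Sum.inr (Sum.inr 1)) = 1 := rfl
      rw [e0, e1]; ring
    refine le_trans inf_le_right ?_
    rw [hd]
  · refine le_iInf₂ fun u hu => ?_
    have hb := T_bounds w W s hval hW u hu
    obtain ⟨hbox, hlin, h0, h1, -, -, -⟩ := hu
    have hWr : (0:ℝ) ≤ W := Nat.cast_nonneg _
    have hA2 : A ≤ 2 * W := by
      have h := Finset.sum_le_sum_of_subset_of_nonneg (f := fun i => (w i : ℝ))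
        (Finset.filter_subset (fun κ => s κ = 1) Finset.univ)
        (fun i _ _ => Nat.cast_nonneg (w i))
      have h2 : (∑ i, (w i : ℝ)) = 2 * W := by exact_mod_cast hW
      rw [h2] at h; exact h
    rw [iInf_pair]
    refine le_inf ?_ ?_
    · apply EReal.coe_le_coe_iff.mpr
      rw [sub_self]; linarith
    · apply EReal.coe_le_coe_iff.mpr
      rw [diff_eq w W u hW hlin]
      nlinarith [hb.1, h0.2, h1.2]

lemma inf2 (w : Fin n → ℕ) (W : ℕ) (s : Fin n → ℤ)
    (hval : ∀ κ, s κ = -1 ∨ s κ = 1) (hW : ∑ κ, w κ = 2 * W) :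
    (⨅ u ∈ UpartR s, ⨅ x' ∈ ({xOneR w W, xTwoR w W} : Set (IdxR n → ℝ)),
        (((∑ j, u j * xTwoR w W j) - ∑ j, u j * x' j : ℝ) : EReal))
      = ((-(∑ κ ∈ Finset.univ.filter fun κ => s κ = 1, (w κ : ℝ)) - 3 * W : ℝ) : EReal) := by
  set A := ∑ κ ∈ Finset.univ.filter fun κ => s κ = 1, (w κ : ℝ) with hA
  have hA0 : 0 ≤ A := Finset.sum_nonneg fun i _ => Nat.cast_nonneg _
  have hWr : (0:ℝ) ≤ W := Nat.cast_nonneg _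
  apply le_antisymm
  · refine le_trans (iInf₂_le (uStar2 s) (uStar2_mem s)) ?_
    rw [iInf_pair]
    have hd : (∑ j, uStar2 s j * xTwoR w W j) - ∑ j, uStar2 s j * xOneR w W j
        = -A - 3 * W := by
      have hmain := diff_eq w W (uStar2 s) hW (uStar2_mem s).2.1
      rw [T_uStar2 w W s hW] at hmain
      have e0 : uStar2 s (Sum.inr (Sum.inr 0)) = 0 := rfl
      have e1 : uStar2 s (Sum.inr (Sum.inr 1)) = -1 := rfl
      rw [e0, e1] at hmain
      linarith
    refine le_trans inf_le_left ?_
    rw [hd]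
  · refine le_iInf₂ fun u hu => ?_
    have hb := T_bounds w W s hval hW u hu
    obtain ⟨hbox, hlin, h0, h1, -, -, -⟩ := hu
    rw [iInf_pair]
    refine le_inf ?_ ?_
    · apply EReal.coe_le_coe_iff.mpr
      have hmain := diff_eq w W u hW hlin
      nlinarith [hb.2, h0.1, h1.1]
    · apply EReal.coe_le_coe_iff.mpr
      rw [sub_self]; linarith

lemma Zreg_eq (w : Fin n → ℕ) (W : ℕ) (s : Fin n → ℤ)
    (hval : ∀ κ, s κ = -1 ∨ s κ = 1) (hW : ∑ κ, w κ = 2 * W) :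
    Zreg w W s
      = ((|(∑ κ ∈ Finset.univ.filter fun κ => s κ = 1, (w κ : ℝ)) - W| - 4 * W : ℝ) : EReal) := by
  set A := ∑ κ ∈ Finset.univ.filter fun κ => s κ = 1, (w κ : ℝ) with hA
  rw [Zreg, iSup_pair, inf1 w W s hval hW, inf2 w W s hval hW]
  have hcast : ((A - 5 * W : ℝ) : EReal) ⊔ ((-A - 3 * W : ℝ) : EReal)
      = ((max (A - 5 * W) (-A - 3 * W) : ℝ) : EReal) := by exact_mod_cast rfl
  rw [hcast]
  congr 1
  rcases le_total A W with h | h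
  · rw [max_eq_right (by linarith), abs_of_nonpos (by linarith)]; ring
  · rw [max_eq_left (by linarith), abs_of_nonneg (by linarith)]; ring

end MMRAux
theorem offline_mmr_partition_reduction
    {n : ℕ} (w : Fin n → ℕ) (hw : ∀ κ, 0 < w κ) (W : ℕ)
    (hW : ∑ κ, w κ = 2 * W) :
    (∀ s : Fin n → ℤ, (∀ κ, s κ = -1 ∨ s κ = 1) →
        Zreg w W s
          = ((max ((∑ κ ∈ Finset.univ.filter fun κ => s κ = 1, (w κ : ℝ)) - W)
                ((W : ℝ) - ∑ κ ∈ Finset.univ.filter fun κ => s κ = 1, (w κ : ℝ))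
              - 4 * W : ℝ) : EReal) ∧
        ((-(4 * (W : ℝ)) : ℝ) : EReal) ≤ Zreg w W s) ∧
      ((⨅ s ∈ {s : Fin n → ℤ | ∀ κ, s κ = -1 ∨ s κ = 1}, Zreg w W s)
          = ((-(4 * (W : ℝ)) : ℝ) : EReal)
        ↔ ∃ X : Finset (Fin n), ∑ κ ∈ X, w κ = W) := by
  have hpart1 : ∀ s : Fin n → ℤ, (∀ κ, s κ = -1 ∨ s κ = 1) →
      ((-(4 * (W : ℝ)) : ℝ) : EReal) ≤ Zreg w W s := by
    intro s hs
    rw [MMRAux.Zreg_eq w W s hs hW]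
    apply EReal.coe_le_coe_iff.mpr
    have := abs_nonneg ((∑ κ ∈ Finset.univ.filter fun κ => s κ = 1, (w κ : ℝ)) - W)
    linarith
  refine ⟨fun s hs => ⟨?_, hpart1 s hs⟩, ?_, ?_⟩
  · rw [MMRAux.Zreg_eq w W s hs hW]
    congr 1
    set A := ∑ κ ∈ Finset.univ.filter fun κ => s κ = 1, (w κ : ℝ)
    rcases le_total A (W:ℝ) with h | h
    · rw [abs_of_nonpos (by linarith), max_eq_right (by linarith)]; ring
    · rw [abs_of_nonneg (by linarith), max_eq_left (by linarith)]
  · intro hinf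
    by_contra hX
    push_neg at hX
    have hbound : ((1 - 4 * (W:ℝ) : ℝ) : EReal)
        ≤ ⨅ s ∈ {s : Fin n → ℤ | ∀ κ, s κ = -1 ∨ s κ = 1}, Zreg w W s := by
      refine le_iInf₂ fun s hs => ?_
      rw [MMRAux.Zreg_eq w W s hs hW]
      apply EReal.coe_le_coe_iff.mpr
      set m := ∑ κ ∈ Finset.univ.filter fun κ => s κ = 1, w κ with hm
      have hAm : (∑ κ ∈ Finset.univ.filter fun κ => s κ = 1, (w κ : ℝ)) = (m:ℝ) := by
        rw [hm]; push_cast; rfl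
      have hne : m ≠ W := hX _
      have habs : (1:ℝ) ≤ |(m:ℝ) - W| := by
        rcases lt_or_gt_of_ne hne with h | h
        · have h' : (m:ℝ) + 1 ≤ W := by exact_mod_cast h
          rw [abs_of_nonpos (by linarith)]; linarith
        · have h' : (W:ℝ) + 1 ≤ m := by exact_mod_cast h
          rw [abs_of_nonneg (by linarith)]; linarith
      rw [hAm]
      linarith
    rw [hinf] at hbound
    have := EReal.coe_le_coe_iff.mp hbound
    linarith
  · rintro ⟨X, hX⟩
    have hs : ∀ κ, (fun κ => if κ ∈ X then (1:ℤ) else -1) κ = -1 ∨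
        (fun κ => if κ ∈ X then (1:ℤ) else -1) κ = 1 := by
      intro κ; by_cases h : κ ∈ X <;> simp [h]
    apply le_antisymm
    · refine le_trans (iInf₂_le (fun κ => if κ ∈ X then (1:ℤ) else -1) hs) ?_
      rw [MMRAux.Zreg_eq w W _ hs hW]
      have hfilter : (Finset.univ.filter fun κ =>
          (fun κ => if κ ∈ X then (1:ℤ) else -1) κ = 1) = X := by
        ext κ
        by_cases h : κ ∈ X <;> simp [h]
      rw [hfilter]
      have hA : (∑ κ ∈ X, (w κ : ℝ)) = (W:ℝ) := by exact_mod_cast hX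
      rw [hA]
      apply EReal.coe_le_coe_iff.mpr
      simp
    · exact le_iInf₂ fun s hs' => hpart1 s hs'
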